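/- Let G = (ℤ/2ℤ)^n, let Q ≤ G be a subgroup of index 2^m (so |Q| = 2^{n−m}), and let π: G → G/Q be the quotient map. Let A ⊆ G/Q be a Sidon set, and let J ≥ 1 be such that for every p ∈ (G/Q) \ A there exist at least J pairwise disjoint unordered triples {a, b, c} of pairwise distinct elements of A with a + b + c = p. Suppose that (2^n − |Q|·|A|)·(1 − 2^{m−n})^J < 1. Then there exists a set B ⊆ G such that π is injective on B, π(B) = A, and for every x ∈ G with π(x) ∉ A there exist pairwise distinct b₁, b₂, b₃ ∈ B with b₁ + b₂ + b₃ = x. -/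

import Mathlib

open Finset

/-- A subset `S` of an abelian group is Sidon: whenever `a + b = c + d` with
`a, b, c, d ∈ S`, `a ≠ b`, and `c ≠ d`, one has `{a, b} = {c, d}`. -/
def IsSidon {G : Type*} [AddCommGroup G] (S : Set G) : Prop :=
  ∀ a ∈ S, ∀ b ∈ S, ∀ c ∈ S, ∀ d ∈ S,
    a ≠ b → c ≠ d → a + b = c + d → ({a, b} : Set G) = {c, d}

lemma card_fiber_eq_card_ker {α β : Type*} [AddCommGroup α] [AddCommGroup β]
    [Fintype α] [DecidableEq β] (f : α →+ β) (b : β) (hb : ∃ x, f x = b) :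
    (univ.filter fun x => f x = b).card = Nat.card f.ker := by
  classical
  obtain ⟨x₀, hx₀⟩ := hb
  have e : {x // f x = b} ≃ f.ker :=
    { toFun := fun y => ⟨y.1 - x₀, by simp [AddMonoidHom.mem_ker, y.2, hx₀]⟩
      invFun := fun k => ⟨k.1 + x₀, by
        have h := k.2
        rw [AddMonoidHom.mem_ker] at h
        simp [h, hx₀]⟩
      left_inv := fun y => by ext; simp
      right_inv := fun k => by ext; simp }
  rw [← Fintype.card_subtype, ← Nat.card_eq_fintype_card, Nat.card_congr e]

lemma card_eq_ker_mul {α β : Type*} [AddCommGroup α] [AddCommGroup β]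
    (f : α →+ β) (hf : Function.Surjective f) :
    Nat.card α = Nat.card f.ker * Nat.card β := by
  have e := QuotientAddGroup.quotientKerEquivOfSurjective f hf
  rw [AddSubgroup.card_eq_card_quotient_mul_card_addSubgroup f.ker,
    Nat.card_congr e.toEquiv, mul_comm]

lemma card_filter_forall_ne {α : Type*} [AddCommGroup α] [Fintype α] {J : ℕ}
    {γ : Type*} [AddCommGroup γ] [Fintype γ] [DecidableEq γ]
    (Φ : α →+ (Fin J → γ)) (hΦ : Function.Surjective Φ) (t : Fin J → γ) :
    (univ.filter fun q => ∀ j, Φ q j ≠ t j).card * (Nat.card γ) ^ J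
      = (Nat.card γ - 1) ^ J * Nat.card α := by
  classical
  set S := univ.filter fun q : α => ∀ j, Φ q j ≠ t j with hS
  set T := univ.filter fun v : Fin J → γ => ∀ j, v j ≠ t j with hT
  have hmap : ∀ q ∈ S, Φ q ∈ T := by
    intro q hq
    simp only [hS, hT, mem_filter, mem_univ, true_and] at hq ⊢
    exact hq
  have h1 : S.card = T.card * Nat.card Φ.ker := by
    rw [Finset.card_eq_sum_card_fiberwise hmap]
    rw [Finset.sum_congr rfl (fun v hv => ?_), Finset.sum_const, smul_eq_mul]
    have : S.filter (fun q => Φ q = v) = univ.filter (fun q => Φ q = v) := by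
      ext q
      simp only [hS, mem_filter, mem_univ, true_and, and_iff_right_iff_imp]
      intro hq j
      rw [hq]
      simp only [hT, mem_filter, mem_univ, true_and] at hv
      exact hv j
    rw [this, card_fiber_eq_card_ker Φ v (hΦ v)]
  have h2 : T.card = (Nat.card γ - 1) ^ J := by
    have e1 : {v : Fin J → γ // ∀ j, v j ≠ t j} ≃ ∀ j, {c : γ // c ≠ t j} :=
      Equiv.subtypePiEquivPi (p := fun j c => c ≠ t j)
    have : T.card = Fintype.card {v : Fin J → γ // ∀ j, v j ≠ t j} := by
      rw [Fintype.card_subtype]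
    rw [this, Fintype.card_congr e1, Fintype.card_pi]
    have : ∀ j : Fin J, Fintype.card {c : γ // c ≠ t j} = Nat.card γ - 1 := by
      intro j
      rw [Nat.card_eq_fintype_card]
      simp [Fintype.card_subtype_compl]
    simp [this, Finset.prod_const, Finset.card_univ]
  have h3 : Nat.card Φ.ker * (Nat.card γ) ^ J = Nat.card α := by
    rw [card_eq_ker_mul Φ hΦ]
    congr 1
    rw [Nat.card_eq_fintype_card, Nat.card_eq_fintype_card, Fintype.card_pi]
    simp
  rw [h1, h2, mul_assoc, h3]

/-- Let `G = (ℤ/2ℤ)^n`, `Q ≤ G` of index `2^m`, `π : G → G/Q` the quotient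
map, and `A ⊆ G/Q` a Sidon set such that every `p ∉ A` is covered by at least `J ≥ 1`
pairwise disjoint unordered triples of pairwise distinct elements of `A`.  If
`(2^n − |Q|·|A|)·(1 − 2^{m−n})^J < 1`, then there is a set `B` of coset representatives of
`A` (i.e. `π` is injective on `B` and `π(B) = A`) covering every `x` with `π(x) ∉ A`. -/
theorem exists_good_representatives (n m : ℕ) (Q : AddSubgroup (Fin n → ZMod 2))
    (hQ : Nat.card ((Fin n → ZMod 2) ⧸ Q) = 2 ^ m)
    (A : Set ((Fin n → ZMod 2) ⧸ Q)) (hA : IsSidon A) (J : ℕ) (hJ : 1 ≤ J)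
    (hcover : ∀ p ∉ A,
      ∃ f : Fin J → ((Fin n → ZMod 2) ⧸ Q) × ((Fin n → ZMod 2) ⧸ Q) × ((Fin n → ZMod 2) ⧸ Q),
        (∀ j, (f j).1 ∈ A ∧ (f j).2.1 ∈ A ∧ (f j).2.2 ∈ A ∧
          (f j).1 ≠ (f j).2.1 ∧ (f j).1 ≠ (f j).2.2 ∧ (f j).2.1 ≠ (f j).2.2 ∧
          (f j).1 + (f j).2.1 + (f j).2.2 = p) ∧
        (∀ j k, j ≠ k →
          ({(f j).1, (f j).2.1, (f j).2.2} : Set ((Fin n → ZMod 2) ⧸ Q)) ∩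
            {(f k).1, (f k).2.1, (f k).2.2} = ∅))
    (hprob : ((2 : ℝ) ^ n - (Nat.card Q : ℝ) * A.ncard) *
        (1 - (2 : ℝ) ^ ((m : ℤ) - (n : ℤ))) ^ J < 1) :
    ∃ B : Set (Fin n → ZMod 2),
      Set.InjOn (QuotientAddGroup.mk' Q) B ∧
      (QuotientAddGroup.mk' Q) '' B = A ∧
      ∀ x : Fin n → ZMod 2, (QuotientAddGroup.mk' Q) x ∉ A →
        ∃ b₁ ∈ B, ∃ b₂ ∈ B, ∃ b₃ ∈ B,
          b₁ ≠ b₂ ∧ b₁ ≠ b₃ ∧ b₂ ≠ b₃ ∧ b₁ + b₂ + b₃ = x := by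
  classical
  set π := QuotientAddGroup.mk' Q with hπdef
  letI : Fintype ((Fin n → ZMod 2) ⧸ Q) := Fintype.ofFinite _
  letI : Fintype Q := Fintype.ofFinite _
  letI : Fintype ↑A := Fintype.ofFinite _
  set K := Nat.card Q with hKdef
  have hK1 : 1 ≤ K := Nat.card_pos
  set rep : ((Fin n → ZMod 2) ⧸ Q) → (Fin n → ZMod 2) := fun p => p.out with hrepdef
  have hrep : ∀ p, π (rep p) = p := fun p => by
    simp only [hrepdef, hπdef, QuotientAddGroup.mk'_apply]
    exact QuotientAddGroup.out_eq' p
  set Bset : (((Fin n → ZMod 2) ⧸ Q) → Q) → Set (Fin n → ZMod 2) :=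
    fun q => (fun p => rep p + (q p : Fin n → ZMod 2)) '' A with hBdef
  have hproj : ∀ (q : ((Fin n → ZMod 2) ⧸ Q) → Q) (p : (Fin n → ZMod 2) ⧸ Q),
      π (rep p + (q p : Fin n → ZMod 2)) = p := by
    intro q p
    have h0 : π ((q p : Fin n → ZMod 2)) = 0 := by
      rw [hπdef, QuotientAddGroup.mk'_apply, QuotientAddGroup.eq_zero_iff]
      exact (q p).2
    rw [map_add, hrep, h0, add_zero]
  -- the main claim: some choice of representatives works
  have claim : ∃ q : ((Fin n → ZMod 2) ⧸ Q) → Q, ∀ x : Fin n → ZMod 2, π x ∉ A →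
      ∃ b₁ ∈ Bset q, ∃ b₂ ∈ Bset q, ∃ b₃ ∈ Bset q,
        b₁ ≠ b₂ ∧ b₁ ≠ b₃ ∧ b₂ ≠ b₃ ∧ b₁ + b₂ + b₃ = x := by
    by_contra hcon
    push_neg at hcon
    set good : (((Fin n → ZMod 2) ⧸ Q) → Q) → (Fin n → ZMod 2) → Prop := fun q x =>
      ∃ b₁ ∈ Bset q, ∃ b₂ ∈ Bset q, ∃ b₃ ∈ Bset q,
        b₁ ≠ b₂ ∧ b₁ ≠ b₃ ∧ b₂ ≠ b₃ ∧ b₁ + b₂ + b₃ = x with hgooddef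
    have hcon' : ∀ q : ((Fin n → ZMod 2) ⧸ Q) → Q,
        ∃ x : Fin n → ZMod 2, π x ∉ A ∧ ¬ good q x := by
      intro q
      obtain ⟨x, hx1, hx2⟩ := hcon q
      refine ⟨x, hx1, ?_⟩
      intro hg
      obtain ⟨b₁, h₁, b₂, h₂, b₃, h₃, hne⟩ := hg
      exact hx2 b₁ h₁ b₂ h₂ b₃ h₃ hne.1 hne.2.1 hne.2.2.1 hne.2.2.2
    set Bad : Finset (Fin n → ZMod 2) := univ.filter (fun x => π x ∉ A) with hBaddef
    set Fail : (Fin n → ZMod 2) → Finset (((Fin n → ZMod 2) ⧸ Q) → Q) :=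
      fun x => univ.filter (fun q => ¬ good q x) with hFaildef
    have hcov : (univ : Finset (((Fin n → ZMod 2) ⧸ Q) → Q)) ⊆ Bad.biUnion Fail := by
      intro q _
      obtain ⟨x, hx1, hx2⟩ := hcon' q
      exact mem_biUnion.2 ⟨x, by simp [hBaddef, hx1], by simp [hFaildef, hx2]⟩
    -- per-x bound
    have key : ∀ x ∈ Bad, (Fail x).card * K ^ J
        ≤ (K - 1) ^ J * Nat.card (((Fin n → ZMod 2) ⧸ Q) → Q) := by
      intro x hx
      have hxA : π x ∉ A := by simpa [hBaddef] using hx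
      obtain ⟨f, hf1, hf2⟩ := hcover (π x) hxA
      have hdisj : ∀ j k, j ≠ k → ∀ y : (Fin n → ZMod 2) ⧸ Q,
          y ∈ ({(f j).1, (f j).2.1, (f j).2.2} : Set ((Fin n → ZMod 2) ⧸ Q)) →
          y ∉ ({(f k).1, (f k).2.1, (f k).2.2} : Set ((Fin n → ZMod 2) ⧸ Q)) := by
        intro j k hjk y hy hyk
        have hmem : y ∈ ({(f j).1, (f j).2.1, (f j).2.2} : Set ((Fin n → ZMod 2) ⧸ Q)) ∩
            {(f k).1, (f k).2.1, (f k).2.2} := ⟨hy, hyk⟩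
        rw [hf2 j k hjk] at hmem
        exact hmem
      have haa : ∀ j k, j ≠ k → (f j).1 ≠ (f k).1 := by
        intro j k hjk h
        exact hdisj j k hjk (f j).1 (by left; rfl) (by rw [h]; left; rfl)
      have hba : ∀ j k, (f j).2.1 ≠ (f k).1 := by
        intro j k
        by_cases hjk : j = k
        · subst hjk; exact ((hf1 j).2.2.2.1).symm
        · intro h
          exact hdisj j k hjk (f j).2.1 (by right; left; rfl) (by rw [h]; left; rfl)
      have hca : ∀ j k, (f j).2.2 ≠ (f k).1 := by
        intro j k
        by_cases hjk : j = k
        · subst hjk; exact ((hf1 j).2.2.2.2.1).symm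
        · intro h
          exact hdisj j k hjk (f j).2.2 (by right; right; rfl) (by rw [h]; left; rfl)
      have htmem : ∀ j : Fin J,
          x - (rep (f j).1 + rep (f j).2.1 + rep (f j).2.2) ∈ Q := by
        intro j
        have h0 : π (x - (rep (f j).1 + rep (f j).2.1 + rep (f j).2.2)) = 0 := by
          rw [map_sub, map_add, map_add, hrep, hrep, hrep, (hf1 j).2.2.2.2.2.2, sub_self]
        rwa [hπdef, QuotientAddGroup.mk'_apply, QuotientAddGroup.eq_zero_iff] at h0
      set t : Fin J → Q := fun j =>
        ⟨x - (rep (f j).1 + rep (f j).2.1 + rep (f j).2.2), htmem j⟩ with htdef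
      set Φ : ((((Fin n → ZMod 2) ⧸ Q) → Q)) →+ (Fin J → Q) :=
        { toFun := fun q j => q (f j).1 + q (f j).2.1 + q (f j).2.2
          map_zero' := by funext j; simp
          map_add' := by
            intro q r
            funext j
            simp only [Pi.add_apply]
            abel } with hΦdef
      have hΦapp : ∀ (q : ((Fin n → ZMod 2) ⧸ Q) → Q) (j : Fin J),
          Φ q j = q (f j).1 + q (f j).2.1 + q (f j).2.2 := fun q j => rfl
      have hΦsurj : Function.Surjective Φ := by
        intro v
        refine ⟨fun p => ∑ k, if p = (f k).1 then v k else 0, ?_⟩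
        funext j
        rw [hΦapp]
        have e1 : (∑ k, if (f j).1 = (f k).1 then v k else 0) = v j := by
          rw [Finset.sum_eq_single j]
          · simp
          · intro k _ hkj
            exact if_neg (haa j k hkj.symm)
          · intro h; exact absurd (mem_univ j) h
        have e2 : (∑ k, if (f j).2.1 = (f k).1 then v k else 0) = 0 :=
          Finset.sum_eq_zero fun k _ => if_neg (hba j k)
        have e3 : (∑ k, if (f j).2.2 = (f k).1 then v k else 0) = 0 :=
          Finset.sum_eq_zero fun k _ => if_neg (hca j k)
        rw [e1, e2, e3, add_zero, add_zero]
      have hsub : Fail x ⊆ univ.filter (fun q => ∀ j, Φ q j ≠ t j) := by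
        intro q hq
        rw [hFaildef, mem_filter] at hq
        rw [mem_filter]
        refine ⟨mem_univ q, fun j hj => ?_⟩
        apply hq.2
        have hcoe : (q (f j).1 : Fin n → ZMod 2) + (q (f j).2.1 : Fin n → ZMod 2)
            + (q (f j).2.2 : Fin n → ZMod 2)
            = x - (rep (f j).1 + rep (f j).2.1 + rep (f j).2.2) := by
          have hval := congrArg (Subtype.val) hj
          rw [hΦapp] at hj
          have := congrArg (Subtype.val) hj
          simpa using this
        refine ⟨rep (f j).1 + (q (f j).1 : Fin n → ZMod 2), ⟨(f j).1, (hf1 j).1, rfl⟩,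
          rep (f j).2.1 + (q (f j).2.1 : Fin n → ZMod 2), ⟨(f j).2.1, (hf1 j).2.1, rfl⟩,
          rep (f j).2.2 + (q (f j).2.2 : Fin n → ZMod 2), ⟨(f j).2.2, (hf1 j).2.2.1, rfl⟩,
          ?_, ?_, ?_, ?_⟩
        · intro h
          exact (hf1 j).2.2.2.1 (by rw [← hproj q (f j).1, ← hproj q (f j).2.1, h])
        · intro h
          exact (hf1 j).2.2.2.2.1 (by rw [← hproj q (f j).1, ← hproj q (f j).2.2, h])
        · intro h
          exact (hf1 j).2.2.2.2.2.1 (by rw [← hproj q (f j).2.1, ← hproj q (f j).2.2, h])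
        · rw [show rep (f j).1 + (q (f j).1 : Fin n → ZMod 2)
              + (rep (f j).2.1 + (q (f j).2.1 : Fin n → ZMod 2))
              + (rep (f j).2.2 + (q (f j).2.2 : Fin n → ZMod 2))
              = ((q (f j).1 : Fin n → ZMod 2) + (q (f j).2.1 : Fin n → ZMod 2)
                + (q (f j).2.2 : Fin n → ZMod 2))
              + (rep (f j).1 + rep (f j).2.1 + rep (f j).2.2) by abel, hcoe]
          abel
      calc (Fail x).card * K ^ J
          ≤ (univ.filter (fun q => ∀ j, Φ q j ≠ t j)).card * K ^ J :=
            Nat.mul_le_mul_right _ (card_le_card hsub)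
        _ = (K - 1) ^ J * Nat.card (((Fin n → ZMod 2) ⧸ Q) → Q) :=
            card_filter_forall_ne Φ hΦsurj t
    -- union bound
    have hΩpos : 0 < Nat.card (((Fin n → ZMod 2) ⧸ Q) → Q) := Nat.card_pos
    have hunion : Nat.card (((Fin n → ZMod 2) ⧸ Q) → Q) ≤ ∑ x ∈ Bad, (Fail x).card := by
      rw [Nat.card_eq_fintype_card, ← Finset.card_univ]
      exact (card_le_card hcov).trans card_biUnion_le
    have hnat : K ^ J ≤ Bad.card * (K - 1) ^ J := by
      have h' : Nat.card (((Fin n → ZMod 2) ⧸ Q) → Q) * K ^ J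
          ≤ Nat.card (((Fin n → ZMod 2) ⧸ Q) → Q) * (Bad.card * (K - 1) ^ J) := by
        calc Nat.card (((Fin n → ZMod 2) ⧸ Q) → Q) * K ^ J
            ≤ (∑ x ∈ Bad, (Fail x).card) * K ^ J := Nat.mul_le_mul_right _ hunion
          _ = ∑ x ∈ Bad, (Fail x).card * K ^ J := by rw [Finset.sum_mul]
          _ ≤ ∑ _x ∈ Bad, (K - 1) ^ J * Nat.card (((Fin n → ZMod 2) ⧸ Q) → Q) :=
              Finset.sum_le_sum key
          _ = Bad.card * ((K - 1) ^ J * Nat.card (((Fin n → ZMod 2) ⧸ Q) → Q)) := by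
              rw [Finset.sum_const, smul_eq_mul]
          _ = Nat.card (((Fin n → ZMod 2) ⧸ Q) → Q) * (Bad.card * (K - 1) ^ J) := by ring
      exact Nat.le_of_mul_le_mul_left h' hΩpos
    -- cardinality identities
    have hcardH : Nat.card (Fin n → ZMod 2) = 2 ^ n := by
      simp [Nat.card_eq_fintype_card]
    have hKN : K * 2 ^ m = 2 ^ n := by
      rw [← hcardH, ← hQ, hKdef, mul_comm]
      exact (AddSubgroup.card_eq_card_quotient_mul_card_addSubgroup Q).symm
    have hpre : ((univ : Finset (Fin n → ZMod 2)).filter (fun x => π x ∈ A)).card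
        = A.toFinset.card * K := by
      have hmap : ∀ x ∈ (univ : Finset (Fin n → ZMod 2)).filter (fun x => π x ∈ A),
          π x ∈ A.toFinset := by
        intro x hx
        rw [mem_filter] at hx
        rw [Set.mem_toFinset]
        exact hx.2
      rw [Finset.card_eq_sum_card_fiberwise hmap]
      rw [Finset.sum_congr rfl (fun a ha => ?_), Finset.sum_const, smul_eq_mul]
      have heq : ((univ : Finset (Fin n → ZMod 2)).filter (fun x => π x ∈ A)).filter
            (fun x => π x = a)
          = (univ : Finset (Fin n → ZMod 2)).filter (fun x => π x = a) := by
        ext y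
        simp only [mem_filter, mem_univ, true_and, and_iff_right_iff_imp]
        intro hy
        rw [hy]
        rw [Set.mem_toFinset] at ha
        exact ha
      rw [heq]
      calc ((univ : Finset (Fin n → ZMod 2)).filter (fun x => π x = a)).card
          = Nat.card ((QuotientAddGroup.mk' Q).ker) :=
            card_fiber_eq_card_ker (QuotientAddGroup.mk' Q) a
              (QuotientAddGroup.mk'_surjective Q a)
        _ = Nat.card Q := by rw [QuotientAddGroup.ker_mk']
    have hpre_le : A.toFinset.card * K ≤ 2 ^ n := by
      rw [← hpre]
      calc ((univ : Finset (Fin n → ZMod 2)).filter (fun x => π x ∈ A)).card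
          ≤ (univ : Finset (Fin n → ZMod 2)).card := card_filter_le _ _
        _ = 2 ^ n := by rw [Finset.card_univ, ← Nat.card_eq_fintype_card, hcardH]
    have hBadcard : Bad.card = 2 ^ n - A.toFinset.card * K := by
      have hBad' : Bad = univ \ ((univ : Finset (Fin n → ZMod 2)).filter
          (fun x => π x ∈ A)) := by
        rw [hBaddef, ← Finset.filter_not]
      rw [hBad', Finset.card_sdiff_of_subset (Finset.filter_subset _ _), hpre, Finset.card_univ,
        ← Nat.card_eq_fintype_card, hcardH]
    -- pass to the reals
    have hKR : (0 : ℝ) < (K : ℝ) := by exact_mod_cast hK1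
    have hKne : (K : ℝ) ≠ 0 := ne_of_gt hKR
    have hcast : ((K : ℝ)) ^ J ≤ (Bad.card : ℝ) * ((K : ℝ) - 1) ^ J := by
      have h1 : ((K ^ J : ℕ) : ℝ) ≤ ((Bad.card * (K - 1) ^ J : ℕ) : ℝ) := by
        exact_mod_cast hnat
      rwa [Nat.cast_mul, Nat.cast_pow, Nat.cast_pow, Nat.cast_sub hK1, Nat.cast_one]
        at h1
    have h1K : (1 : ℝ) ≤ (Bad.card : ℝ) * (1 - 1 / (K : ℝ)) ^ J := by
      have heq : (1 : ℝ) - 1 / (K : ℝ) = ((K : ℝ) - 1) / (K : ℝ) := by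
        field_simp
      rw [heq, div_pow, ← mul_div_assoc, le_div_iff₀ (pow_pos hKR J), one_mul]
      exact hcast
    have hBadR : (Bad.card : ℝ) = 2 ^ n - (K : ℝ) * A.ncard := by
      rw [hBadcard, Nat.cast_sub hpre_le]
      push_cast
      rw [Set.ncard_eq_toFinset_card' A]
      push_cast
      ring
    have h2mn : (2 : ℝ) ^ ((m : ℤ) - (n : ℤ)) = 1 / (K : ℝ) := by
      have hKN' : (K : ℝ) * 2 ^ m = 2 ^ n := by exact_mod_cast hKN
      rw [zpow_sub₀ (by norm_num : (2 : ℝ) ≠ 0), zpow_natCast, zpow_natCast, ← hKN']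
      have h2m : (0:ℝ) < 2 ^ m := by positivity
      field_simp
    rw [h2mn, ← hBadR] at hprob
    linarith
  -- assemble the result
  obtain ⟨q, hq⟩ := claim
  refine ⟨Bset q, ?_, ?_, hq⟩
  · intro b hb b' hb' heq
    obtain ⟨p, hp, rfl⟩ := hb
    obtain ⟨p', hp', rfl⟩ := hb'
    have : p = p' := by
      rw [← hproj q p, ← hproj q p']
      exact heq
    rw [this]
  · ext y
    constructor
    · rintro ⟨b, ⟨p, hp, rfl⟩, rfl⟩
      rw [hproj]
      exact hp
    · intro hy
      exact ⟨rep y + (q y : Fin n → ZMod 2), ⟨y, hy, rfl⟩, hproj q y⟩
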